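/- arXiv:2210.02677 — 2 statements merged into one kernel-verified Lean document; each statement's English description precedes it below -/
import Mathlib

section
/- Bernstein inequality (ball case, k = 1): there is a constant C > 0 such that for every λ > 0 and every Schwartz function f : ℝ → ℂ with Fourier transform supported in {ξ : |ξ| ≤ (4/3)λ}, one has ‖f'‖_{L^∞} ≤ C λ ‖f‖_{L^∞}. -/
open MeasureTheory Real FourierTransform

/-- Fourier transform with the convention ℱf(ξ) = ∫ e^{-ixξ} f(x) dx. -/
noncomputable def ft (f : ℝ → ℂ) (ξ : ℝ) : ℂ :=
  ∫ x : ℝ, Complex.exp (-(Complex.I * x * ξ)) * f x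

/-- A smooth compactly supported function is Schwartz. -/
noncomputable def toSchwartz (f : ℝ → ℂ) (hf : ContDiff ℝ ((⊤:ℕ∞)) f) (h : HasCompactSupport f) :
    SchwartzMap ℝ ℂ where
  toFun := f
  smooth' := hf
  decay' := by
    intro k n
    have h1 : HasCompactSupport (fun x => ‖x‖ ^ k * ‖iteratedFDeriv ℝ n f x‖) := by
      apply HasCompactSupport.mul_left
      exact (h.iteratedFDeriv n).norm
    have h2 : Continuous (fun x : ℝ => ‖x‖ ^ k * ‖iteratedFDeriv ℝ n f x‖) := by
      exact (continuous_norm.pow k).mul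
        ((hf.continuous_iteratedFDeriv (by exact_mod_cast le_top)).norm)
    obtain ⟨C, hC⟩ := h2.bounded_above_of_compact_support h1
    exact ⟨C, fun x => (le_abs_self _).trans (hC x)⟩

noncomputable def bb : ContDiffBump (0:ℝ) := ⟨1, 2, one_pos, one_lt_two⟩

lemma bb_rIn : bb.rIn = 1 := rfl

/-- The kernel profile. -/
noncomputable def Wf : ℝ → ℂ := fun η => (2*π*Complex.I*η) * (bb η : ℂ)

lemma Wf_contDiff : ContDiff ℝ ((⊤:ℕ∞)) Wf := by
  apply ContDiff.mul
  · exact ContDiff.mul contDiff_const Complex.ofRealCLM.contDiff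
  · exact Complex.ofRealCLM.contDiff.comp (bb.contDiff (n := ⊤))

lemma Wf_compactSupport : HasCompactSupport Wf := by
  apply HasCompactSupport.mul_left
  exact (bb.hasCompactSupport).comp_left (g := fun r : ℝ => (r : ℂ)) (by simp)

noncomputable def WS : SchwartzMap ℝ ℂ := toSchwartz Wf Wf_contDiff Wf_compactSupport

noncomputable def AA : ℝ := ∫ z : ℝ, ‖𝓕 Wf z‖

lemma fourier_Wf_integrable : Integrable (𝓕 Wf) := by
  have : Integrable (⇑(SchwartzMap.fourierTransformCLM ℂ WS)) := SchwartzMap.integrable _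
  simpa [SchwartzMap.fourier_coe, show ⇑WS = Wf from rfl] using this

lemma AA_nonneg : 0 ≤ AA := integral_nonneg fun x => norm_nonneg _

lemma ft_eq (f : ℝ → ℂ) (w : ℝ) : (𝓕 f) w = ft f (2*π*w) := by
  rw [Real.fourier_real_eq]
  unfold ft
  congr 1 with x
  rw [Circle.smul_def, smul_eq_mul]
  congr 1
  rw [Real.fourierChar_apply]
  push_cast
  ring_nf

theorem stmt8 :
    ∃ C : ℝ, 0 < C ∧ ∀ (lam : ℝ), 0 < lam → ∀ f : SchwartzMap ℝ ℂ,
      Function.support (ft f) ⊆ {ξ : ℝ | |ξ| ≤ (4/3) * lam} →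
      ∀ x : ℝ, ‖deriv (⇑f) x‖ ≤ C * lam * ⨆ y : ℝ, ‖f y‖ := by
  refine ⟨AA + 1, by linarith [AA_nonneg], fun lam hlam f hsupp x => ?_⟩
  -- the sup norm
  set S : ℝ := ⨆ y : ℝ, ‖f y‖ with hS
  have hbdd : BddAbove (Set.range fun y : ℝ => ‖f y‖) := by
    obtain ⟨M, hM⟩ := f.decay 0 0
    refine ⟨M, fun r hr => ?_⟩
    obtain ⟨y, rfl⟩ := hr
    have := hM.2 y
    simpa [norm_iteratedFDeriv_zero] using this
  have hfS : ∀ y, ‖f y‖ ≤ S := fun y => le_ciSup hbdd y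
  have hS0 : 0 ≤ S := (norm_nonneg (f 0)).trans (hfS 0)
  -- the Fourier transform of f, as a Schwartz map
  set gS : SchwartzMap ℝ ℂ := FourierTransform.fourierCLE ℂ (SchwartzMap ℝ ℂ) f with hgS
  have hgf : ⇑gS = 𝓕 ⇑f := by simp [hgS, FourierTransform.fourierCLE_apply, SchwartzMap.fourier_coe]
  -- support of 𝓕 f
  have hg_supp : ∀ ξ : ℝ, gS ξ ≠ 0 → |ξ| ≤ lam := by
    intro ξ hne
    rw [hgf] at hne
    rw [ft_eq] at hne
    have h1 : |2*π*ξ| ≤ (4/3) * lam := hsupp (Function.mem_support.mpr hne)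
    have h2 : |2*π*ξ| = 2*π*|ξ| := by
      rw [abs_mul, abs_of_nonneg (by positivity : (0:ℝ) ≤ 2*π)]
    nlinarith [pi_gt_three, abs_nonneg ξ]
  -- integrability facts
  have hg_int : Integrable (⇑gS) := gS.integrable
  have hg_int' : Integrable (fun ξ : ℝ => ξ • gS ξ) := by
    have h1 : Integrable (fun ξ : ℝ => ‖ξ‖ ^ 1 * ‖gS ξ‖) := gS.integrable_pow_mul volume 1
    refine h1.mono' ?_ ?_
    · exact (continuous_id.smul gS.continuous).aestronglyMeasurable
    · filter_upwards with ξ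
      simp [norm_smul]
  -- derivative formula
  have hderiv : deriv (⇑f) x = -(𝓕 (fun ξ : ℝ => (-2 * π * Complex.I * ξ) • gS ξ) (-x)) := by
    have hFg : ∀ w : ℝ, HasDerivAt (𝓕 ⇑gS)
        (𝓕 (fun ξ : ℝ => (-2 * π * Complex.I * ξ) • gS ξ) w) w :=
      fun w => Real.hasDerivAt_fourier hg_int hg_int' w
    have hinv : ⇑f = fun y : ℝ => 𝓕 ⇑gS (-y) := by
      funext y
      conv_lhs => rw [← (FourierTransform.fourierCLE ℂ (SchwartzMap ℝ ℂ)).symm_apply_apply f]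
      rw [← hgS]
      have h2 : ⇑((FourierTransform.fourierCLE ℂ (SchwartzMap ℝ ℂ)).symm gS) = 𝓕⁻ ⇑gS := by
        rw [SchwartzMap.fourierTransformCLE_symm_apply, SchwartzMap.fourierInv_coe]
      rw [h2]
      exact Real.fourierInv_eq_fourier_neg _ y
    have hcomp : HasDerivAt (fun y : ℝ => 𝓕 ⇑gS (-y))
        (-(𝓕 (fun ξ : ℝ => (-2 * π * Complex.I * ξ) • gS ξ) (-x))) x := by
      have h1 : HasDerivAt ((𝓕 ⇑gS) ∘ fun y : ℝ => -y)
          ((-1 : ℝ) • (𝓕 (fun ξ : ℝ => (-2 * π * Complex.I * ξ) • gS ξ) (-x))) x :=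
        HasDerivAt.scomp (g₁ := 𝓕 ⇑gS) (h := fun y : ℝ => -y) x (hFg (-x)) (hasDerivAt_neg x)
      simpa [Function.comp_def] using h1
    rw [hinv]
    exact hcomp.deriv
  -- rewrite with the multiplier
  have hmult : (fun ξ : ℝ => (-2 * π * Complex.I * ξ) • gS ξ)
      = fun ξ : ℝ => gS ξ * ((-(2*π*Complex.I*ξ)) * (bb (ξ/lam) : ℂ)) := by
    funext ξ
    by_cases hne : gS ξ = 0
    · simp [hne]
    · have h1 : bb (ξ/lam) = 1 := by
        apply bb.one_of_mem_closedBall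
        have := hg_supp ξ hne
        simp only [Metric.mem_closedBall, Real.dist_eq, sub_zero, bb_rIn]
        rw [abs_div, abs_of_pos hlam, div_le_one hlam]
        exact this
      simp only [h1, Complex.ofReal_one, mul_one, smul_eq_mul]
      ring
  -- the test function
  set u : ℝ → ℂ := fun ξ =>
    Complex.exp ((2*π*ξ*x : ℝ) * Complex.I) * ((2*π*Complex.I*ξ) * (bb (ξ/lam) : ℂ)) with hu
  have hu_cont : Continuous u := by
    apply Continuous.mul
    · apply Complex.continuous_exp.comp
      fun_prop
    · apply Continuous.mul
      · fun_prop
      · exact Complex.ofRealCLM.continuous.comp (bb.continuous.comp (continuous_id.div_const lam))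
  have hu_supp : HasCompactSupport u := by
    apply HasCompactSupport.mul_left
    apply HasCompactSupport.mul_left
    have h1 : HasCompactSupport (⇑bb) := bb.hasCompactSupport
    have h2 : HasCompactSupport (fun ξ : ℝ => bb (ξ/lam)) := by
      have := h1.comp_homeomorph (Homeomorph.mulRight₀ lam⁻¹ (by positivity))
      simpa [div_eq_mul_inv, Function.comp_def] using this
    exact h2.comp_left (g := fun r : ℝ => (r : ℂ)) (by simp)
  have hu_int : Integrable u := hu_cont.integrable_of_hasCompactSupport hu_supp
  -- step 1 : deriv f x = ∫ ξ, 𝓕 f ξ • u ξ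
  have step1 : deriv (⇑f) x = ∫ ξ : ℝ, (𝓕 ⇑f) ξ • u ξ := by
    rw [hderiv, hmult, Real.fourier_real_eq_integral_exp_smul, ← integral_neg]
    congr 1 with ξ
    rw [← hgf]
    have he : ((-2*π*ξ*(-x) : ℝ) : ℂ) * Complex.I = ((2*π*ξ*x : ℝ) : ℂ) * Complex.I := by
      push_cast; ring
    simp only [smul_eq_mul, hu, he]
    ring
  -- step 2 : multiplication formula
  have step2 : (∫ ξ : ℝ, (𝓕 ⇑f) ξ • u ξ) = ∫ y : ℝ, f y • (𝓕 u) y := by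
    have hflip : (innerₗ ℝ).flip = innerₗ ℝ := by
      refine LinearMap.ext fun a => LinearMap.ext fun b => ?_
      simp only [LinearMap.flip_apply, innerₗ_apply_apply]
      exact real_inner_comm a b
    have hL : Continuous fun p : ℝ × ℝ => (innerₗ ℝ) p.1 p.2 := by
      simpa using (by fun_prop : Continuous fun p : ℝ × ℝ => p.2 * p.1)
    have := VectorFourier.integral_fourierIntegral_smul_eq_flip (L := innerₗ ℝ)
      (μ := (volume : Measure ℝ)) (ν := (volume : Measure ℝ)) Real.continuous_fourierChar hL f.integrable hu_int
    rw [hflip] at this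
    exact this
  -- step 3 : computation of 𝓕 u
  have step3 : ∀ y : ℝ, (𝓕 u) y = (lam:ℂ)^2 • (𝓕 Wf) (lam * (y - x)) := by
    intro y
    rw [Real.fourier_real_eq_integral_exp_smul,
        Real.fourier_real_eq_integral_exp_smul]
    have hcv := MeasureTheory.Measure.integral_comp_mul_left
      (fun ξ : ℝ => Complex.exp ((-2*π*ξ*y : ℝ) * Complex.I) • u ξ) lam
    have hlam' : |lam⁻¹| = lam⁻¹ := abs_of_pos (by positivity)
    rw [hlam'] at hcv
    have : (∫ ξ : ℝ, Complex.exp ((-2*π*ξ*y : ℝ) * Complex.I) • u ξ)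
        = lam • ∫ η : ℝ, Complex.exp ((-2*π*(lam*η)*y : ℝ) * Complex.I) • u (lam*η) := by
      rw [hcv, smul_smul, mul_inv_cancel₀ hlam.ne', one_smul]
    rw [this, ← integral_smul, ← integral_smul]
    congr 1 with η
    have hdiv : lam * η / lam = η := by field_simp
    simp only [hu, hdiv, smul_eq_mul, Complex.real_smul]
    have hexp : Complex.exp (((-2*π*(lam*η)*y : ℝ) : ℂ) * Complex.I)
          * Complex.exp (((2*π*(lam*η)*x : ℝ) : ℂ) * Complex.I)
        = Complex.exp (((-2*π*η*(lam*(y-x)) : ℝ) : ℂ) * Complex.I) := by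
      rw [← Complex.exp_add]; congr 1; push_cast; ring
    rw [show Wf η = (2*π*Complex.I*η) * ((bb η : ℝ) : ℂ) from rfl, ← hexp]
    push_cast
    ring
  -- step 4 : the norm bound
  have hWcomp : Integrable (fun y : ℝ => ‖(𝓕 Wf) (lam * (y - x))‖) := by
    have h1 : Integrable (fun z : ℝ => (𝓕 Wf) (lam * z)) :=
      fourier_Wf_integrable.comp_mul_left' hlam.ne'
    have h2 : Integrable (fun y : ℝ => (𝓕 Wf) (lam * (y - x))) := h1.comp_sub_right x
    exact h2.norm
  have hnorm_u : ∀ y : ℝ, ‖(𝓕 u) y‖ = lam^2 * ‖(𝓕 Wf) (lam * (y - x))‖ := by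
    intro y
    rw [step3 y, norm_smul]
    congr 1
    simp [abs_of_pos hlam]
  calc ‖deriv (⇑f) x‖ = ‖∫ y : ℝ, f y • (𝓕 u) y‖ := by rw [step1, step2]
    _ ≤ ∫ y : ℝ, ‖f y • (𝓕 u) y‖ := norm_integral_le_integral_norm _
    _ ≤ ∫ y : ℝ, S * (lam^2 * ‖(𝓕 Wf) (lam * (y - x))‖) := by
        apply integral_mono_of_nonneg
        · filter_upwards with y; positivity
        · exact (hWcomp.const_mul _).const_mul S
        · filter_upwards with y
          rw [norm_smul, hnorm_u y]
          apply mul_le_mul_of_nonneg_right (hfS y) (by positivity)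
    _ = S * (lam^2 * (lam⁻¹ * AA)) := by
        rw [integral_const_mul, integral_const_mul]
        congr 2
        have h1 : (∫ y : ℝ, ‖(𝓕 Wf) (lam * (y - x))‖)
            = ∫ z : ℝ, ‖(𝓕 Wf) (lam * z)‖ :=
          integral_sub_right_eq_self (fun z : ℝ => ‖(𝓕 Wf) (lam * z)‖) x
        rw [h1, MeasureTheory.Measure.integral_comp_mul_left (fun z : ℝ => ‖(𝓕 Wf : ℝ → ℂ) z‖) lam,
          abs_of_pos (by positivity : (0:ℝ) < lam⁻¹), smul_eq_mul]
        rfl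
    _ ≤ (AA + 1) * lam * S := by
        have h2 : lam^2 * (lam⁻¹ * AA) = AA * lam := by field_simp
        rw [h2]
        nlinarith [AA_nonneg, hS0, hlam]
end

section
/- Bernstein inequality (annulus case, lower bound, k = 1): there is a constant C > 0 such that for every λ > 0 and every Schwartz function f : ℝ → ℂ with Fourier transform supported in the annulus {ξ : (3/4)λ ≤ |ξ| ≤ (8/3)λ}, one has ‖f‖_{L^∞} ≤ C λ^{-1} ‖f'‖_{L^∞}. -/
open MeasureTheory Complex Metric Real
open scoped FourierTransform RealInnerProductSpace ContDiff

namespace Stmt9Aux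

noncomputable def bOut : ContDiffBump (0:ℝ) :=
  ⟨4/(3*π), 8/(3*π), by positivity, by rw [div_lt_div_iff₀ (by positivity) (by positivity)]; nlinarith [pi_pos]⟩

noncomputable def bIn : ContDiffBump (0:ℝ) :=
  ⟨3/(16*π), 3/(8*π), by positivity, by rw [div_lt_div_iff₀ (by positivity) (by positivity)]; nlinarith [pi_pos]⟩

noncomputable def Ψ (ξ : ℝ) : ℂ := ((bOut ξ - bIn ξ : ℝ) : ℂ) * (2 * π * Complex.I * ξ)⁻¹

lemma contDiff_Ψ : ContDiff ℝ ∞ Ψ := by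
  rw [contDiff_iff_contDiffAt]
  intro ξ
  by_cases hξ : |ξ| < 3/(16*π)
  · have hzero : ∀ η ∈ ball (0:ℝ) (3/(16*π)), Ψ η = 0 := by
      intro η hη
      rw [mem_ball, dist_zero_right, Real.norm_eq_abs] at hη
      have h1 : bOut η = 1 := bOut.one_of_mem_closedBall (by
        rw [mem_closedBall, dist_zero_right, Real.norm_eq_abs]
        have : (3:ℝ)/(16*π) ≤ 4/(3*π) := by
          rw [div_le_div_iff₀ (by positivity) (by positivity)]; nlinarith [pi_pos]
        exact hη.le.trans this)
      have h2 : bIn η = 1 := bIn.one_of_mem_closedBall (by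
        rw [mem_closedBall, dist_zero_right, Real.norm_eq_abs]; exact hη.le)
      simp [Ψ, h1, h2]
    have hmem : ball (0:ℝ) (3/(16*π)) ∈ nhds ξ :=
      (isOpen_ball).mem_nhds (by rwa [mem_ball, dist_zero_right, Real.norm_eq_abs])
    exact contDiffAt_const.congr_of_eventuallyEq
      (Filter.eventuallyEq_of_mem hmem hzero)
  · have hne : ξ ≠ 0 := by
      intro h; apply hξ; rw [h, abs_zero]; positivity
    have h1 : ContDiffAt ℝ ∞ (fun η : ℝ => ((bOut η - bIn η : ℝ) : ℂ)) ξ :=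
      (Complex.ofRealCLM.contDiff.comp (bOut.contDiff.sub bIn.contDiff)).contDiffAt
    have h2 : ContDiffAt ℝ ∞ (fun η : ℝ => (2 * π * Complex.I * η)⁻¹) ξ := by
      apply ContDiffAt.inv
      · exact (contDiff_const.mul Complex.ofRealCLM.contDiff).contDiffAt
      · simp [Complex.ofReal_ne_zero, Real.pi_ne_zero, Complex.I_ne_zero, hne,
          mul_ne_zero, Complex.ext_iff]
    exact h1.mul h2

lemma Ψ_zero {ξ : ℝ} (h : 8/(3*π) ≤ |ξ|) : Ψ ξ = 0 := by
  have h1 : bOut ξ = 0 := bOut.zero_of_le_dist (by rwa [dist_zero_right, Real.norm_eq_abs])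
  have h2 : bIn ξ = 0 := bIn.zero_of_le_dist (by
    rw [dist_zero_right, Real.norm_eq_abs]
    refine le_trans ?_ h
    show (3:ℝ)/(8*π) ≤ 8/(3*π)
    rw [div_le_div_iff₀ (by positivity) (by positivity)]; nlinarith [pi_pos])
  simp [Ψ, h1, h2]

lemma hasCompactSupport_Ψ : HasCompactSupport Ψ :=
  HasCompactSupport.intro (isCompact_closedBall (0:ℝ) (8/(3*π))) (fun x hx => Ψ_zero (by
    rw [mem_closedBall, dist_zero_right, Real.norm_eq_abs, not_le] at hx; exact hx.le))

lemma Ψ_key {η : ℝ} (h1 : 3/(8*π) ≤ |η|) (h2 : |η| ≤ 4/(3*π)) :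
    Ψ η * (2 * π * Complex.I * η) = 1 := by
  have hb1 : bOut η = 1 := bOut.one_of_mem_closedBall (by
    rwa [mem_closedBall, dist_zero_right, Real.norm_eq_abs])
  have hb2 : bIn η = 0 := bIn.zero_of_le_dist (by
    rwa [dist_zero_right, Real.norm_eq_abs])
  have hne : η ≠ 0 := by
    intro h; rw [h, abs_zero] at h1
    have hpos : (0:ℝ) < 3/(8*π) := by positivity
    linarith
  have hprod : (2 * (π:ℂ) * Complex.I * η) ≠ 0 := by
    simp [Complex.ofReal_ne_zero, Real.pi_ne_zero, Complex.I_ne_zero, hne,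
      mul_ne_zero, Complex.ext_iff]
  rw [Ψ, hb1, hb2]
  push_cast
  rw [sub_zero, one_mul, inv_mul_cancel₀ hprod]

noncomputable def ΨS : SchwartzMap ℝ ℂ where
  toFun := Ψ
  smooth' := contDiff_Ψ
  decay' := by
    intro k n
    have hcs : HasCompactSupport (iteratedFDeriv ℝ n Ψ) := hasCompactSupport_Ψ.iteratedFDeriv n
    have hg_cont : Continuous (fun x : ℝ => ‖x‖^k * ‖iteratedFDeriv ℝ n Ψ x‖) :=
      (continuous_norm.pow k).mul (contDiff_Ψ.continuous_iteratedFDeriv (by exact_mod_cast le_top)).norm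
    have hg_supp : HasCompactSupport (fun x : ℝ => ‖x‖^k * ‖iteratedFDeriv ℝ n Ψ x‖) :=
      hcs.norm.mul_left
    obtain ⟨C, hC⟩ := hg_supp.exists_bound_of_continuous hg_cont
    refine ⟨C, fun x => ?_⟩
    have := hC x
    rwa [Real.norm_eq_abs, _root_.abs_of_nonneg (mul_nonneg (pow_nonneg (norm_nonneg _) _) (norm_nonneg _))] at this

lemma fourier_eq_ft (f : ℝ → ℂ) (w : ℝ) : 𝓕 f w = ft f (2*π*w) := by
  rw [Real.fourier_eq', ft]
  congr 1; ext x
  rw [smul_eq_mul]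
  congr 2
  simp only [RCLike.inner_apply, conj_trivial]
  push_cast
  ring

lemma fourier_eq_int (g : ℝ → ℂ) (w : ℝ) :
    𝓕 g w = ∫ v : ℝ, Complex.exp (↑(-2*π*(v*w)) * Complex.I) * g v := by
  rw [Real.fourier_eq']
  congr 1; ext v
  rw [smul_eq_mul]
  congr 2
  simp only [RCLike.inner_apply, conj_trivial]
  push_cast
  ring

lemma fourierInv_eq_int (g : ℝ → ℂ) (w : ℝ) :
    𝓕⁻ g w = ∫ v : ℝ, Complex.exp (↑(2*π*(v*w)) * Complex.I) * g v := by
  rw [Real.fourierInv_eq']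
  congr 1; ext v
  rw [smul_eq_mul]
  congr 2
  simp only [RCLike.inner_apply, conj_trivial]
  push_cast
  ring

lemma inner_int (lam : ℝ) (hlam : 0 < lam) (z : ℝ) :
    ∫ ξ : ℝ, Complex.exp (↑(2*π*(ξ*z)) * Complex.I) * ((lam:ℂ)⁻¹ * Ψ (ξ/lam)) =
      𝓕 Ψ (-(lam*z)) := by
  have hlamne : (lam:ℂ) ≠ 0 := Complex.ofReal_ne_zero.2 hlam.ne'
  set g : ℝ → ℂ := fun η => Complex.exp (↑(-2*π*(η*(-(lam*z)))) * Complex.I) * ((lam:ℂ)⁻¹ * Ψ η)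
    with hg
  have h1 : (fun ξ : ℝ => Complex.exp (↑(2*π*(ξ*z)) * Complex.I) * ((lam:ℂ)⁻¹ * Ψ (ξ/lam)))
      = fun ξ : ℝ => g (ξ/lam) := by
    funext ξ
    rw [hg]
    simp only
    congr 3
    push_cast
    field_simp
  rw [h1, MeasureTheory.Measure.integral_comp_div g lam]
  have h2 : ∫ η : ℝ, g η = (lam:ℂ)⁻¹ * 𝓕 Ψ (-(lam*z)) := by
    rw [fourier_eq_int]
    rw [← MeasureTheory.integral_const_mul]
    congr 1; funext η
    rw [hg]; ring
  rw [h2, _root_.abs_of_pos hlam]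
  rw [Complex.real_smul]
  field_simp

end Stmt9Aux

open Stmt9Aux SchwartzMap

theorem stmt9 :
    ∃ C : ℝ, 0 < C ∧ ∀ (lam : ℝ), 0 < lam → ∀ f : SchwartzMap ℝ ℂ,
      Function.support (ft f) ⊆ {ξ : ℝ | (3/4) * lam ≤ |ξ| ∧ |ξ| ≤ (8/3) * lam} →
      ∀ x : ℝ, ‖f x‖ ≤ C * lam⁻¹ * ⨆ y : ℝ, ‖deriv (⇑f) y‖ := by
  classical
  set K : SchwartzMap ℝ ℂ := SchwartzMap.fourierTransformCLM ℝ ΨS with hKdef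
  have hKco : ∀ u : ℝ, K u = 𝓕 Ψ u := fun u => by
    rw [hKdef]; rfl
  set k0 : ℝ := ∫ u : ℝ, ‖K u‖ with hk0
  have hk0nonneg : 0 ≤ k0 := integral_nonneg (fun u => norm_nonneg _)
  refine ⟨k0 + 1, by positivity, ?_⟩
  intro lam hlam f hsupp x
  have hlamne : (lam:ℂ) ≠ 0 := Complex.ofReal_ne_zero.2 hlam.ne'
  set S : ℝ := ⨆ y : ℝ, ‖deriv (⇑f) y‖ with hSdef
  have hS : ∀ y : ℝ, ‖deriv (⇑f) y‖ ≤ S := by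
    intro y
    apply le_ciSup (f := fun z => ‖deriv (⇑f) z‖)
    refine ⟨SchwartzMap.seminorm ℝ 0 0 (SchwartzMap.derivCLM ℝ ℂ f), ?_⟩
    rintro - ⟨z, rfl⟩
    simpa using SchwartzMap.norm_le_seminorm ℝ (SchwartzMap.derivCLM ℝ ℂ f) z
  have hS0 : 0 ≤ S := (norm_nonneg _).trans (hS 0)
  have hf'int : Integrable (deriv ⇑f) := by
    have h := (SchwartzMap.derivCLM ℝ ℂ f).integrable (μ := volume)
    rwa [show ⇑(SchwartzMap.derivCLM ℝ ℂ f) = deriv ⇑f from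
      funext fun y => SchwartzMap.derivCLM_apply (𝕜 := ℝ) f y] at h
  have h𝓕int : Integrable (𝓕 ⇑f) := by
    exact (fourierTransformCLM ℝ f).integrable (μ := volume)
  have hfd : 𝓕 (deriv ⇑f) = fun ξ : ℝ => (2 * π * Complex.I * ξ) • 𝓕 ⇑f ξ :=
    Real.fourier_deriv f.integrable f.differentiable hf'int
  -- the multiplier
  set psil : ℝ → ℂ := fun ξ => (lam:ℂ)⁻¹ * Ψ (ξ/lam) with hψdef
  have hψint : Integrable psil := by
    have : Integrable (fun ξ : ℝ => Ψ (ξ/lam)) := by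
      have := (ΨS.integrable (μ := volume)).comp_div hlam.ne'
      exact this
    exact this.const_mul _
  have hψcont : Continuous psil :=
    continuous_const.mul (contDiff_Ψ.continuous.comp (continuous_id.div_const lam))
  -- key multiplier identity
  have hA : ∀ ξ : ℝ, 𝓕 ⇑f ξ = psil ξ * 𝓕 (deriv ⇑f) ξ := by
    intro ξ
    have hfdξ := congrFun hfd ξ
    by_cases h0 : 𝓕 ⇑f ξ = 0
    · rw [hfdξ, h0]; simp
    · have hmem : (3/4) * lam ≤ |2*π*ξ| ∧ |2*π*ξ| ≤ (8/3) * lam := by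
        have : ft (⇑f) (2*π*ξ) ≠ 0 := by rw [← fourier_eq_ft]; exact h0
        exact hsupp this
      have habs : |2*π*ξ| = 2*π*|ξ| := by
        rw [abs_mul, _root_.abs_of_pos Real.two_pi_pos]
      rw [habs] at hmem
      obtain ⟨hl, hu⟩ := hmem
      have h1 : 3/(8*π) ≤ |ξ/lam| := by
        rw [abs_div, _root_.abs_of_pos hlam, div_le_div_iff₀ (by positivity) hlam]
        nlinarith [pi_pos]
      have h2 : |ξ/lam| ≤ 4/(3*π) := by
        rw [abs_div, _root_.abs_of_pos hlam, div_le_div_iff₀ hlam (by positivity)]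
        nlinarith [pi_pos]
      have hkey := Ψ_key h1 h2
      have hone : psil ξ * (2 * π * Complex.I * ξ) = 1 := by
        rw [hψdef]
        simp only
        calc (lam:ℂ)⁻¹ * Ψ (ξ/lam) * (2 * π * Complex.I * ξ)
            = Ψ (ξ/lam) * (2 * π * Complex.I * (↑(ξ/lam) : ℂ)) := by
              push_cast
              field_simp
              try ring
          _ = 1 := hkey
      rw [hfdξ, smul_eq_mul]
      linear_combination (-(𝓕 (⇑f) ξ)) * hone
  -- Fourier inversion
  have hinv : (f : ℝ → ℂ) x = ∫ ξ : ℝ, Complex.exp (↑(2*π*(ξ*x)) * Complex.I) * 𝓕 ⇑f ξ := by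
    conv_lhs => rw [← f.continuous.fourierInv_fourier_eq f.integrable h𝓕int]
    exact fourierInv_eq_int (𝓕 ⇑f) x
  -- Fubini setup
  set G : ℝ → ℝ → ℂ := fun ξ y =>
    Complex.exp (↑(2*π*(ξ*x)) * Complex.I) * psil ξ *
      (Complex.exp (↑(-2*π*(y*ξ)) * Complex.I) * deriv (⇑f) y) with hGdef
  have hGcont : Continuous (Function.uncurry G) := by
    apply Continuous.mul
    · apply Continuous.mul
      · exact Complex.continuous_exp.comp (by fun_prop)
      · exact hψcont.comp continuous_fst
    · apply Continuous.mul
      · exact Complex.continuous_exp.comp (by fun_prop)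
      · exact (f.smooth'.continuous_deriv (by exact_mod_cast le_top)).comp continuous_snd
  have hGint : Integrable (Function.uncurry G) (volume.prod volume) := by
    apply Integrable.mono' (hψint.norm.mul_prod hf'int.norm) hGcont.aestronglyMeasurable
    refine Filter.Eventually.of_forall (fun p => ?_)
    have : ‖Function.uncurry G p‖ = ‖psil p.1‖ * ‖deriv (⇑f) p.2‖ := by
      simp only [Function.uncurry, hGdef, norm_mul, Complex.norm_exp_ofReal_mul_I]
      ring
    rw [this]
  -- main computation
  have hmain : (f : ℝ → ℂ) x = ∫ y : ℝ, deriv (⇑f) y * K (lam*(y - x)) := by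
    rw [hinv]
    have step1 : (∫ ξ : ℝ, Complex.exp (↑(2*π*(ξ*x)) * Complex.I) * 𝓕 ⇑f ξ)
        = ∫ ξ : ℝ, ∫ y : ℝ, G ξ y := by
      congr 1; funext ξ
      rw [hA ξ, fourier_eq_int]
      rw [← MeasureTheory.integral_const_mul, ← MeasureTheory.integral_const_mul]
      congr 1; funext y
      rw [hGdef]; ring
    rw [step1, MeasureTheory.integral_integral_swap hGint]
    congr 1; funext y
    have step2 : (∫ ξ : ℝ, G ξ y)
        = (∫ ξ : ℝ, Complex.exp (↑(2*π*(ξ*(x - y))) * Complex.I) * psil ξ) * deriv (⇑f) y := by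
      rw [← MeasureTheory.integral_mul_const]
      congr 1; funext ξ
      rw [hGdef]
      simp only
      have hexp : Complex.exp (↑(2*π*(ξ*x)) * Complex.I) * Complex.exp (↑(-2*π*(y*ξ)) * Complex.I)
          = Complex.exp (↑(2*π*(ξ*(x - y))) * Complex.I) := by
        rw [← Complex.exp_add]; congr 1; push_cast; ring
      linear_combination (psil ξ * deriv (⇑f) y) * hexp
    rw [step2]
    have step3 : (∫ ξ : ℝ, Complex.exp (↑(2*π*(ξ*(x - y))) * Complex.I) * psil ξ)
        = K (lam*(y - x)) := by
      rw [hψdef]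
      have := inner_int lam hlam (x - y)
      rw [this, hKco]
      congr 1
      ring
    rw [step3]; ring
  -- final estimate
  have hKint : Integrable (fun y : ℝ => ‖K (lam*(y - x))‖) := by
    have m1 : Integrable (fun u : ℝ => ‖K (lam*u)‖) := K.integrable.norm.comp_mul_left' hlam.ne'
    have m2 : Integrable (fun y : ℝ => ‖K (lam*(y + -x))‖) := m1.comp_add_right (-x)
    simpa [sub_eq_add_neg] using m2
  have hbound : ‖(f : ℝ → ℂ) x‖ ≤ S * (lam⁻¹ * k0) := by
    rw [hmain]
    calc ‖∫ y : ℝ, deriv (⇑f) y * K (lam*(y - x))‖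
        ≤ ∫ y : ℝ, ‖deriv (⇑f) y * K (lam*(y - x))‖ := norm_integral_le_integral_norm _
      _ ≤ ∫ y : ℝ, S * ‖K (lam*(y - x))‖ := by
          apply integral_mono_of_nonneg (Filter.Eventually.of_forall (fun y => norm_nonneg _))
            (hKint.const_mul S)
          refine Filter.Eventually.of_forall (fun y => ?_)
          show ‖deriv (⇑f) y * K (lam*(y - x))‖ ≤ S * ‖K (lam*(y - x))‖
          rw [norm_mul]
          exact mul_le_mul_of_nonneg_right (hS y) (norm_nonneg _)
      _ = S * ∫ y : ℝ, ‖K (lam*(y - x))‖ := MeasureTheory.integral_const_mul S _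
      _ = S * (lam⁻¹ * k0) := by
          congr 1
          have t1 : (∫ y : ℝ, ‖K (lam*(y - x))‖) = ∫ u : ℝ, ‖K (lam*u)‖ := by
            have := MeasureTheory.integral_sub_right_eq_self (μ := volume) (fun u : ℝ => ‖K (lam*u)‖) x
            simpa using this
          rw [t1, MeasureTheory.Measure.integral_comp_mul_left (fun u : ℝ => ‖K u‖) lam,
            abs_inv, _root_.abs_of_pos hlam, smul_eq_mul, hk0]
  calc ‖(f : ℝ → ℂ) x‖ ≤ S * (lam⁻¹ * k0) := hbound
    _ ≤ (k0 + 1) * lam⁻¹ * S := by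
        have hi : 0 < lam⁻¹ := inv_pos.2 hlam
        nlinarith
end
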